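/- Let d be a pseudometric on ℕ₀³ with coordinatewise λ-contraction property, no 1-way Cauchy sequence, μ = inf ρ > 0, and K ≥ 2. Fix x₀ with ρ(x₀) < 2μ and for i ∈ [3] define Sᵢ(K,x₀) = {y : d(x₀,y) ≤ Kμ and d(y, y+eᵢ) ≤ Kμ}. If 1 > 2λKC₁(2+λ)²/(1−λ) (with C₁ = 49158), then in every 3-way set z + ℕ₀³ there exists t with d(t,x₀) ≤ ((2+λ)/(1−λ))Kμ such that for some i ∈ [3], d(s+eᵢ, t+eᵢ) > λ·d(s,t) for every s ∈ Sᵢ(K,x₀). -/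

import Mathlib

/-- The grid ℕ₀³. -/
abbrev Grid : Type := Fin 3 → ℕ

/-- Standard basis vector eᵢ. -/
def e (i : Fin 3) : Grid := fun j => if j = i then 1 else 0

/-- ρ(x) = max of the three distances to successors. -/
noncomputable def rho (d : Grid → Grid → ℝ) (x : Grid) : ℝ :=
  max (d x (x + e 0)) (max (d x (x + e 1)) (d x (x + e 2)))

/-- A 1-way sequence: consecutive differences are basis vectors. -/
def OneWay (s : ℕ → Grid) : Prop := ∀ n, ∃ i, s (n + 1) = s n + e i

/-- Cauchy with respect to the pseudometric d. -/
def IsCauchySeq (d : Grid → Grid → ℝ) (s : ℕ → Grid) : Prop :=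
  ∀ ε > (0 : ℝ), ∃ N, ∀ m ≥ N, ∀ n ≥ N, d (s m) (s n) < ε

/-- d is a pseudometric. -/
def Pseudo (d : Grid → Grid → ℝ) : Prop :=
  (∀ x, d x x = 0) ∧ (∀ x y, 0 ≤ d x y) ∧ (∀ x y, d x y = d y x) ∧
    (∀ x y z, d x z ≤ d x y + d y z)

/-- The coordinatewise λ-contraction property. -/
def Contractive (d : Grid → Grid → ℝ) (lam : ℝ) : Prop :=
  ∀ a b : Grid, ∃ i : Fin 3, d (a + e i) (b + e i) ≤ lam * d a b

/-- A 2-way set: each element has exactly two of its three successors inside. -/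
def TwoWaySet (S : Set Grid) : Prop :=
  ∀ s ∈ S, ∃ i : Fin 3, s + e i ∉ S ∧ ∀ j : Fin 3, j ≠ i → s + e j ∈ S

theorem stmt15 (d : Grid → Grid → ℝ) (lam : ℝ) (h0 : 0 < lam) (h1 : lam < 1)
    (hd : Pseudo d) (hc : Contractive d lam)
    (hno : ¬ ∃ s : ℕ → Grid, OneWay s ∧ IsCauchySeq d s)
    (μ : ℝ) (hμ : IsGLB (Set.range (rho d)) μ) (hμ0 : 0 < μ)
    (K : ℝ) (hK : 2 ≤ K)
    (x₀ : Grid) (hx₀ : rho d x₀ < 2 * μ)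
    (hcond : 1 > 2 * lam * K * 49158 * (2 + lam) ^ 2 / (1 - lam))
    -- (a): in each 3-way set there is a point within ρ(x₀)/(1-λ)+ε of x₀
    (ha : ∀ ε > (0 : ℝ), ∀ z : Grid, ∃ k : Grid,
      d (z + k) x₀ ≤ rho d x₀ / (1 - lam) + ε)
    -- (b): all 3-way sets have diameter > 2((2+λ)/(1-λ))Kμ
    (hb : ∀ β : Grid, ∃ k k' : Grid,
      d (β + k) (β + k') > 2 * ((2 + lam) / (1 - lam)) * K * μ) :
    ∀ z : Grid, ∃ k : Grid,
      d (z + k) x₀ ≤ ((2 + lam) / (1 - lam)) * K * μ ∧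
      ∃ i : Fin 3, ∀ s : Grid, d x₀ s ≤ K * μ → d s (s + e i) ≤ K * μ →
        d (s + e i) (z + k + e i) > lam * d s (z + k) := by

  intro z
  by_contra hcon
  push_neg at hcon
  have h1l : (0:ℝ) < 1 - lam := by linarith
  set B : ℝ := ((2 + lam) / (1 - lam)) * K * μ with hBdef
  have hKμ : 2 * μ ≤ K * μ := by nlinarith
  have hBval : B * (1 - lam) = (2 + lam) * (K * μ) := by
    rw [hBdef, show (2 + lam) / (1 - lam) * K * μ * (1 - lam) = (2 + lam) / (1 - lam) * (1 - lam) * (K * μ) by ring, div_mul_cancel₀ _ h1l.ne']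
  obtain ⟨hd0, hdnn, hdsym, hdtri⟩ := hd
  -- base point from (a)
  obtain ⟨k₀, hk₀⟩ := ha μ hμ0 z
  have hbase : d (z + k₀) x₀ ≤ B := by
    have hr : rho d x₀ / (1 - lam) * (1 - lam) = rho d x₀ :=
      div_mul_cancel₀ _ (ne_of_gt h1l)
    nlinarith [hk₀, hx₀, hμ0, div_nonneg (hdnn x₀ (x₀ + e 0)) h1l.le,
      mul_pos h1l hμ0]
  -- the step: if the conclusion fails everywhere, every successor stays in the ball
  have step : ∀ t : Grid, d (z + t) x₀ ≤ B → ∀ i : Fin 3,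
      d (z + t + e i) x₀ ≤ B := by
    intro t ht i
    obtain ⟨s, hs1, hs2, hs3⟩ := hcon t ht i
    have t1 : d (z + t + e i) x₀ ≤ d (z + t + e i) (s + e i) + d (s + e i) x₀ :=
      hdtri _ _ _
    have t2 : d (s + e i) x₀ ≤ d (s + e i) s + d s x₀ := hdtri _ _ _
    have t3 : d (z + t + e i) (s + e i) = d (s + e i) (z + t + e i) := hdsym _ _
    have t4 : d s (z + t) ≤ d s x₀ + d x₀ (z + t) := hdtri _ _ _
    have t5 : d x₀ (z + t) = d (z + t) x₀ := hdsym _ _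
    have t6 : d s x₀ = d x₀ s := hdsym _ _
    have t7 : d (s + e i) s = d s (s + e i) := hdsym _ _
    have t9 : d s (z + t) ≤ K * μ + B := by
      rw [t5, t6] at t4; linarith
    have t8 : lam * d s (z + t) ≤ lam * (K * μ + B) :=
      mul_le_mul_of_nonneg_left t9 h0.le
    nlinarith [hs3, mul_pos h1l hμ0]
  -- by induction, the whole 3-way set above z + k₀ stays in the ball
  have main : ∀ n : ℕ, ∀ v : Grid, v 0 + v 1 + v 2 = n →
      d (z + (k₀ + v)) x₀ ≤ B := by
    intro n
    induction n with
    | zero =>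
      intro v hv
      have hv0 : v = 0 := by
        funext j; fin_cases j <;> simp <;> omega
      rw [hv0]
      simpa using hbase
    | succ n ih =>
      intro v hv
      have : ∃ i : Fin 3, 0 < v i := by
        by_contra hno'
        push_neg at hno'
        have := hno' 0; have := hno' 1; have := hno' 2
        omega
      obtain ⟨i, hi⟩ := this
      set w : Grid := Function.update v i (v i - 1) with hw
      have hvw : v = w + e i := by
        funext j
        by_cases hji : j = i
        · subst hji
          simp [hw, e, Function.update]
          omega
        · simp [hw, e, Function.update, hji]
      have hwsum : w 0 + w 1 + w 2 = n := by
        have e0 := congrFun hvw 0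
        have e1 := congrFun hvw 1
        have e2 := congrFun hvw 2
        simp [e] at e0 e1 e2
        fin_cases i <;> simp at e0 e1 e2 <;> omega
      have hstep := step (k₀ + w) (ih w hwsum) i
      have heq : z + (k₀ + w) + e i = z + (k₀ + v) := by
        rw [hvw]; funext j; simp [e]; ring
      rwa [heq] at hstep
  -- contradiction with (b)
  obtain ⟨k, k', hkk⟩ := hb (z + k₀)
  have hA : d (z + (k₀ + k)) x₀ ≤ B := main _ k rfl
  have hA' : d (z + (k₀ + k')) x₀ ≤ B := main _ k' rfl
  have e1 : z + k₀ + k = z + (k₀ + k) := by funext j; simp; ring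
  have e2 : z + k₀ + k' = z + (k₀ + k') := by funext j; simp; ring
  have htri : d (z + k₀ + k) (z + k₀ + k') ≤
      d (z + (k₀ + k)) x₀ + d (z + (k₀ + k')) x₀ := by
    rw [e1, e2, ← hdsym x₀ (z + (k₀ + k'))]
    exact hdtri _ _ _
  have h2B : 2 * ((2 + lam) / (1 - lam)) * K * μ = 2 * B := by rw [hBdef]; ring
  rw [h2B] at hkk
  linarith
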